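/- Let β = (β_{ij})_{i,j∈Θ} and β' = (β'_{ij})_{i,j∈Θ} be nonnegative weight matrices, and define the weighted KL functionals K(μ) := Σ_{i,j∈Θ, i≠j} β_{ij} KL(μ_i‖μ_j) and K'(μ) := Σ_{i,j∈Θ, i≠j} β'_{ij} KL(μ_i‖μ_j) on bounded experiments. If K and K' are ordinally equivalent — i.e., for all bounded experiments μ, ν: K(μ) ≥ K(ν) if and only if K'(μ) ≥ K'(ν) — then there exists λ > 0 such that β' = λ·β. -/

import Mathlib

open MeasureTheory ProbabilityTheory
open scoped ENNReal NNReal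

/-- A statistical experiment over the state space `Θ`. -/
structure Experiment (Θ : Type) : Type 1 where
  S : Type
  mS : MeasurableSpace S
  lam : Measure S
  sigmaFinite : SigmaFinite lam
  P : Θ → Measure S
  isProb : ∀ i, IsProbabilityMeasure (P i)
  ac : ∀ i, (P i).AbsolutelyContinuous lam

attribute [instance] Experiment.mS Experiment.sigmaFinite Experiment.isProb

namespace Experiment

variable {Θ : Type}

/-- Bounded experiment: log-likelihood ratios are essentially bounded. -/
def IsBdd (μ : Experiment Θ) : Prop :=
  ∀ i j : Θ, i ≠ j →
    ∃ c : ℝ, ∀ᵐ s ∂μ.lam, |Real.log ((μ.P i).rnDeriv (μ.P j) s).toReal| ≤ c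

/-- Product (bundle) of two experiments. -/
noncomputable def prodE (μ ν : Experiment Θ) : Experiment Θ where
  S := μ.S × ν.S
  mS := inferInstance
  lam := μ.lam.prod ν.lam
  sigmaFinite := inferInstance
  P := fun i => (μ.P i).prod (ν.P i)
  isProb := fun i => inferInstance
  ac := fun i => Measure.AbsolutelyContinuous.prod (μ.ac i) (ν.ac i)

/-- A fully uninformative one-signal experiment. -/
noncomputable def triv (Θ : Type) : Experiment Θ where
  S := Unit
  mS := inferInstance
  lam := Measure.dirac ()
  sigmaFinite := inferInstance
  P := fun _ => Measure.dirac ()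
  isProb := fun _ => inferInstance
  ac := fun _ => Measure.AbsolutelyContinuous.rfl

/-- k-fold independent product μ^{⊗k}. -/
noncomputable def pow (μ : Experiment Θ) : ℕ → Experiment Θ
  | 0 => triv Θ
  | 1 => μ
  | (k+2) => (μ.pow (k+1)).prodE μ

/-- Mixture a·μ + (1-a)·ν of two experiments (on the disjoint union of signal spaces). -/
noncomputable def mix (a : ℝ) (μ ν : Experiment Θ) (h0 : 0 ≤ a) (h1 : a ≤ 1) :
    Experiment Θ where
  S := μ.S ⊕ ν.S
  mS := inferInstance
  lam := μ.lam.map Sum.inl + ν.lam.map Sum.inr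
  sigmaFinite := by
    have embl : MeasurableEmbedding (Sum.inl : μ.S → μ.S ⊕ ν.S) :=
      ⟨Sum.inl_injective, measurable_inl, fun _ hs => hs.inl_image⟩
    have embr : MeasurableEmbedding (Sum.inr : ν.S → μ.S ⊕ ν.S) :=
      ⟨Sum.inr_injective, measurable_inr, fun _ hs => hs.inr_image⟩
    have h1 : SigmaFinite (μ.lam.map Sum.inl) := embl.sigmaFinite_map
    have h2 : SigmaFinite (ν.lam.map Sum.inr) := embr.sigmaFinite_map
    infer_instance
  P := fun i => ENNReal.ofReal a • (μ.P i).map Sum.inl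
        + ENNReal.ofReal (1-a) • (ν.P i).map Sum.inr
  isProb := fun i => by
    haveI := μ.isProb i
    haveI := ν.isProb i
    constructor
    rw [Measure.add_apply, Measure.smul_apply, Measure.smul_apply,
      Measure.map_apply measurable_inl MeasurableSet.univ,
      Measure.map_apply measurable_inr MeasurableSet.univ]
    simp only [Set.preimage_univ, measure_univ, smul_eq_mul, mul_one]
    rw [← ENNReal.ofReal_add h0 (by linarith)]
    norm_num
  ac := fun i => by
    have hl1 : (μ.P i).map Sum.inl ≪ μ.lam.map Sum.inl + ν.lam.map Sum.inr :=
      ((μ.ac i).map measurable_inl).trans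
        (Measure.absolutelyContinuous_of_le (Measure.le_add_right le_rfl))
    have hl2 : (ν.P i).map Sum.inr ≪ μ.lam.map Sum.inl + ν.lam.map Sum.inr :=
      ((ν.ac i).map measurable_inr).trans
        (Measure.absolutelyContinuous_of_le (Measure.le_add_left le_rfl))
    intro s hs
    simp only [Measure.add_apply, Measure.smul_apply, smul_eq_mul]
    rw [hl1 hs, hl2 hs]
    simp

/-- Blackwell dominance via a Markov kernel (garbling). -/
def Blackwell (μ ν : Experiment Θ) : Prop :=
  ∃ κ : Kernel μ.S ν.S, IsMarkovKernel κ ∧ ∀ i, ν.P i = (μ.P i).bind κ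

/-- Uninformative experiment: the same signal distribution in every state. -/
def Uninformative (φ : Experiment Θ) : Prop := ∀ i j : Θ, φ.P i = φ.P j

/-- Density of the state-i signal distribution w.r.t. the reference measure. -/
noncomputable def dens (μ : Experiment Θ) (i : Θ) (s : μ.S) : ℝ :=
  ((μ.P i).rnDeriv μ.lam s).toReal

/-- Kullback–Leibler divergence KL(μ_i ‖ μ_j). -/
noncomputable def KL (μ : Experiment Θ) (i j : Θ) : ℝ :=
  ∫ s, Real.log ((μ.P i).rnDeriv (μ.P j) s).toReal ∂(μ.P i)

end Experiment

section Div

variable {Θ : Type} [Fintype Θ] [Nonempty Θ] [DecidableEq Θ]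

/-- Extended Rényi divergence D_α for a non-unit weight vector α. -/
noncomputable def Dalpha (μ : Experiment Θ) (α : Θ → ℝ) : ℝ :=
  (1 / (Finset.univ.sup' Finset.univ_nonempty α - 1)) *
    Real.log (∫ s, ∏ i, μ.dens i s ^ α i ∂μ.lam)

end Div

section Div2

variable {Θ : Type} [Fintype Θ] [Nonempty Θ] [DecidableEq Θ]

open Experiment

/-- The set A₊ of nonnegative non-unit weight vectors summing to one. -/
def Aplus (Θ : Type) [Fintype Θ] : Set (Θ → ℝ) :=
  {α | (∀ i, 0 ≤ α i) ∧ ∑ i, α i = 1 ∧ ¬ ∃ i, α i = 1}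

/-- The unified divergence D_{α,β}: the extended Rényi divergence for non-unit α, and
a β-weighted sum of KL divergences when α is the unit vector e_i. -/
noncomputable def Dab (μ : Experiment Θ) (α β : Θ → ℝ) : ℝ :=
  if h : ∃ i, α i = 1 then
    ∑ j ∈ Finset.univ.erase h.choose, β j * μ.KL h.choose j
  else Dalpha μ α

/-- The parameter space P of pairs (α,β) of probability vectors. -/
def ParamSet (Θ : Type) [Fintype Θ] : Set ((Θ → ℝ) × (Θ → ℝ)) :=
  {p | (∀ i, 0 ≤ p.1 i) ∧ (∀ i, 0 ≤ p.2 i) ∧ ∑ i, p.1 i = 1 ∧ ∑ i, p.2 i = 1}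

/-- Rényi divergence R_t(μ_i ‖ μ_j), with R_1 = KL. -/
noncomputable def Renyi (μ : Experiment Θ) (i j : Θ) (t : ℝ) : ℝ :=
  if t = 1 then μ.KL i j
  else (1 / (t - 1)) * Real.log (∫ s, μ.dens i s ^ t * μ.dens j s ^ (1 - t) ∂μ.lam)

/-- The set Ψ of direction vectors. -/
def PsiSet (Θ : Type) [Fintype Θ] : Set (Θ → ℝ) :=
  {ψ | ∑ i, ψ i = 0 ∧ ∃ k, ψ k = 1}

/-- α^{γ,ψ} = e_k + (γ-1)ψ. -/
noncomputable def alphaGP (k : Θ) (γ : ℝ) (ψ : Θ → ℝ) : Θ → ℝ :=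
  fun i => (if i = k then (1 : ℝ) else 0) + (γ - 1) * ψ i

/-- The generalized divergence D_{γ,ψ} with γ ∈ [1/|Θ|, ∞] (∞ encoded as ⊤ in ℝ≥0∞). -/
noncomputable def Dgp (μ : Experiment Θ) (γ : ℝ≥0∞) (ψ : Θ → ℝ) : ℝ :=
  if h : ∃ k, ψ k = 1 then
    if γ = ⊤ then Real.log (essSup (fun s => ∏ i, μ.dens i s ^ ψ i) μ.lam)
    else if γ = 1 then ∑ l ∈ Finset.univ.erase h.choose, (-(ψ l)) * μ.KL h.choose l
    else
      (1 / (Finset.univ.sup' Finset.univ_nonempty (alphaGP h.choose γ.toReal ψ) - 1)) *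
        Real.log (∫ s, ∏ i, μ.dens i s ^ alphaGP h.choose γ.toReal ψ i ∂μ.lam)
  else 0

/-- The compact parameter space [1/|Θ|, ∞] × Ψ. -/
def GammaPsiSet (Θ : Type) [Fintype Θ] : Set (ℝ≥0∞ × (Θ → ℝ)) :=
  {p | ((Fintype.card Θ : ℝ≥0∞))⁻¹ ≤ p.1 ∧ p.2 ∈ PsiSet Θ}

/-- R_∞(μ_i ‖ μ_j) = log esssup dμ_i/dμ_j. -/
noncomputable def Rinf (μ : Experiment Θ) (i j : Θ) : ℝ :=
  Real.log (essSup (fun s => ((μ.P i).rnDeriv (μ.P j) s).toReal) μ.lam)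

end Div2

section Axioms

variable {Θ : Type}

open Experiment

/-- C is nonnegative on bounded experiments (i.e. C : 𝓔 → ℝ₊). -/
def NonnegCost (C : Experiment Θ → ℝ) : Prop := ∀ μ : Experiment Θ, μ.IsBdd → 0 ≤ C μ

def BlackwellMonotone (C : Experiment Θ → ℝ) : Prop :=
  ∀ μ ν : Experiment Θ, μ.IsBdd → ν.IsBdd → μ.Blackwell ν → C ν ≤ C μ

def SubAdditive (C : Experiment Θ → ℝ) : Prop :=
  ∀ μ ν : Experiment Θ, μ.IsBdd → ν.IsBdd → C (μ.prodE ν) ≤ C μ + C ν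

def AdditiveCost (C : Experiment Θ → ℝ) : Prop :=
  ∀ μ ν : Experiment Θ, μ.IsBdd → ν.IsBdd → C (μ.prodE ν) = C μ + C ν

def IdentityAdditive (C : Experiment Θ → ℝ) : Prop :=
  ∀ μ : Experiment Θ, μ.IsBdd → ∀ k : ℕ, 1 ≤ k → C (μ.pow k) = (k : ℝ) * C μ

def MixtureConvex (C : Experiment Θ → ℝ) : Prop :=
  ∀ μ ν : Experiment Θ, μ.IsBdd → ν.IsBdd → ∀ a : ℝ, ∀ (h0 : 0 < a) (h1 : a < 1),
    C (Experiment.mix a μ ν h0.le h1.le) ≤ a * C μ + (1 - a) * C ν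

def MixtureLinear (C : Experiment Θ → ℝ) : Prop :=
  ∀ μ ν : Experiment Θ, μ.IsBdd → ν.IsBdd → ∀ a : ℝ, ∀ (h0 : 0 < a) (h1 : a < 1),
    C (Experiment.mix a μ ν h0.le h1.le) = a * C μ + (1 - a) * C ν

def DilutionLinear (C : Experiment Θ → ℝ) : Prop :=
  ∀ μ φ : Experiment Θ, μ.IsBdd → φ.IsBdd → φ.Uninformative →
    ∀ a : ℝ, ∀ (h0 : 0 < a) (h1 : a < 1),
      C (Experiment.mix a μ φ h0.le h1.le) = a * C μ + (1 - a) * C φ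

end Axioms


namespace KLAux

open Finset

/-- Bernoulli KL divergence written with log differences. -/
noncomputable def dKL (x y : ℝ) : ℝ :=
  x * (Real.log x - Real.log y) + (1 - x) * (Real.log (1 - x) - Real.log (1 - y))

lemma dKL_nonneg {x y : ℝ} (hx : x ∈ Set.Ioo (0:ℝ) 1) (hy : y ∈ Set.Ioo (0:ℝ) 1) :
    0 ≤ dKL x y := by
  obtain ⟨hx0, hx1⟩ := hx; obtain ⟨hy0, hy1⟩ := hy
  have h1 : Real.log (y / x) ≤ y / x - 1 := Real.log_le_sub_one_of_pos (by positivity)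
  have h2 : Real.log ((1 - y) / (1 - x)) ≤ (1 - y) / (1 - x) - 1 :=
    Real.log_le_sub_one_of_pos (by apply div_pos <;> linarith)
  rw [Real.log_div hy0.ne' hx0.ne'] at h1
  rw [Real.log_div (by linarith) (by linarith)] at h2
  have e1 : x * (y / x) = y := by field_simp
  have e2 : (1 - x) * ((1 - y) / (1 - x)) = 1 - y := by
    rw [mul_comm]; exact div_mul_cancel₀ _ (by linarith)
  have m1 := mul_le_mul_of_nonneg_left h1 hx0.le
  have m2 := mul_le_mul_of_nonneg_left h2 (by linarith : (0:ℝ) ≤ 1 - x)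
  unfold dKL
  nlinarith [m1, m2]

lemma dKL_pos {x y : ℝ} (hx : x ∈ Set.Ioo (0:ℝ) 1) (hy : y ∈ Set.Ioo (0:ℝ) 1)
    (hne : x ≠ y) : 0 < dKL x y := by
  obtain ⟨hx0, hx1⟩ := hx; obtain ⟨hy0, hy1⟩ := hy
  have h1 : Real.log (y / x) < y / x - 1 :=
    Real.log_lt_sub_one_of_pos (by positivity) (by
      intro hcon
      apply hne
      field_simp at hcon
      linarith)
  have h2 : Real.log ((1 - y) / (1 - x)) ≤ (1 - y) / (1 - x) - 1 :=
    Real.log_le_sub_one_of_pos (by apply div_pos <;> linarith)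
  rw [Real.log_div hy0.ne' hx0.ne'] at h1
  rw [Real.log_div (by linarith) (by linarith)] at h2
  have e1 : x * (y / x) = y := by field_simp
  have e2 : (1 - x) * ((1 - y) / (1 - x)) = 1 - y := by
    rw [mul_comm]; exact div_mul_cancel₀ _ (by linarith)
  have m1 := mul_lt_mul_of_pos_left h1 hx0
  have m2 := mul_le_mul_of_nonneg_left h2 (by linarith : (0:ℝ) ≤ 1 - x)
  unfold dKL
  nlinarith [m1, m2]

/-- The cross-difference identity. -/
lemma dKL_cross (x y : ℝ) :
    dKL x y - dKL x (1/2) - dKL (1/2) y + dKL (1/2) (1/2)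
      = (x - 1/2) * (Real.log (1 - y) - Real.log y) := by
  unfold dKL
  rw [show (1:ℝ) - 1/2 = 1/2 by norm_num]
  ring

end KLAux

namespace KLAux

open MeasureTheory Finset

/-- Signal weights of the diluted Bernoulli experiment. -/
noncomputable def wf (a t : ℝ) : Fin 3 → ℝ≥0∞ := fun x =>
  if x = 0 then ENNReal.ofReal (a * t)
  else if x = 1 then ENNReal.ofReal (a * (1 - t))
  else ENNReal.ofReal (1 - a)

lemma wf_pos {a t : ℝ} (ha0 : 0 < a) (ha1 : a < 1) (ht : t ∈ Set.Ioo (0:ℝ) 1)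
    (x : Fin 3) : 0 < wf a t x := by
  obtain ⟨ht0, ht1⟩ := ht
  unfold wf
  split_ifs <;> (rw [ENNReal.ofReal_pos]; nlinarith)

lemma wf_ne_top (a t : ℝ) (x : Fin 3) : wf a t x ≠ ⊤ := by
  unfold wf; split_ifs <;> exact ENNReal.ofReal_ne_top

lemma lint_wf {a t : ℝ} (ha0 : 0 ≤ a) (ha1 : a ≤ 1) (ht0 : 0 ≤ t) (ht1 : t ≤ 1) :
    ∫⁻ x, wf a t x ∂(Measure.count) = 1 := by
  rw [MeasureTheory.lintegral_count, tsum_fintype, Fin.sum_univ_three]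
  have e0 : wf a t 0 = ENNReal.ofReal (a * t) := rfl
  have e1 : wf a t 1 = ENNReal.ofReal (a * (1 - t)) := rfl
  have e2 : wf a t 2 = ENNReal.ofReal (1 - a) := rfl
  rw [e0, e1, e2, ← ENNReal.ofReal_add (by positivity) (by nlinarith),
    ← ENNReal.ofReal_add (by nlinarith) (by nlinarith),
    show a * t + a * (1 - t) + (1 - a) = 1 by ring, ENNReal.ofReal_one]

/-- The measure with density `wf a t` w.r.t. counting measure on `Fin 3`. -/
noncomputable def wdm (a t : ℝ) : Measure (Fin 3) := Measure.count.withDensity (wf a t)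

lemma wdm_isProb {a t : ℝ} (ha0 : 0 < a) (ha1 : a < 1) (ht : t ∈ Set.Ioo (0:ℝ) 1) :
    IsProbabilityMeasure (wdm a t) := by
  constructor
  rw [wdm, MeasureTheory.withDensity_apply _ MeasurableSet.univ, Measure.restrict_univ,
    lint_wf ha0.le ha1.le ht.1.le ht.2.le]

lemma count_ac {g : Fin 3 → ℝ≥0∞} (hg : ∀ x, 0 < g x) :
    (Measure.count : Measure (Fin 3)).AbsolutelyContinuous (Measure.count.withDensity g) := by
  refine Measure.AbsolutelyContinuous.mk (fun s hs h0 => ?_)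
  rw [MeasureTheory.withDensity_apply _ hs] at h0
  by_contra hne
  obtain ⟨x, hx⟩ : s.Nonempty := by
    by_contra hemp
    exact hne (by rw [Set.not_nonempty_iff_eq_empty.mp hemp]; simp)
  have hle : g x * Measure.count {x} ≤ ∫⁻ y in s, g y ∂(Measure.count) := by
    rw [← MeasureTheory.lintegral_singleton]
    exact MeasureTheory.lintegral_mono_set (Set.singleton_subset_iff.mpr hx)
  rw [h0, Measure.count_singleton, mul_one] at hle
  exact absurd (le_antisymm hle zero_le) (hg x).ne'

lemma wdm_ac {a s t : ℝ} (ha0 : 0 < a) (ha1 : a < 1) (ht : t ∈ Set.Ioo (0:ℝ) 1) :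
    (wdm a s).AbsolutelyContinuous (wdm a t) :=
  (withDensity_absolutelyContinuous _ _).trans (count_ac (wf_pos ha0 ha1 ht))

lemma wdm_rnDeriv {a s t : ℝ} (ha0 : 0 < a) (ha1 : a < 1) (hs : s ∈ Set.Ioo (0:ℝ) 1)
    (ht : t ∈ Set.Ioo (0:ℝ) 1) :
    (wdm a s).rnDeriv (wdm a t) =ᵐ[wdm a t] fun x => wf a s x / wf a t x := by
  haveI := wdm_isProb ha0 ha1 ht
  have hP : wdm a s = (wdm a t).withDensity (fun x => wf a s x / wf a t x) := by
    rw [wdm, wdm, ← MeasureTheory.withDensity_mul _ (measurable_of_finite _)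
      (measurable_of_finite _)]
    congr 1
    funext x
    show wf a s x = wf a t x * (wf a s x / wf a t x)
    exact (ENNReal.mul_div_cancel' (fun h => absurd h (wf_pos ha0 ha1 ht x).ne')
      (fun h => absurd h (wf_ne_top a t x))).symm
  rw [hP]
  exact Measure.rnDeriv_withDensity _ (measurable_of_finite _)

lemma wdm_singleton (a t : ℝ) (x : Fin 3) : wdm a t {x} = wf a t x := by
  rw [wdm, MeasureTheory.withDensity_apply _ (measurableSet_singleton x),
    MeasureTheory.lintegral_singleton, Measure.count_singleton, mul_one]

lemma wdm_KL {a s t : ℝ} (ha0 : 0 < a) (ha1 : a < 1) (hs : s ∈ Set.Ioo (0:ℝ) 1)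
    (ht : t ∈ Set.Ioo (0:ℝ) 1) :
    ∫ x, Real.log (((wdm a s).rnDeriv (wdm a t) x).toReal) ∂(wdm a s) = a * dKL s t := by
  haveI := wdm_isProb ha0 ha1 hs
  have hac : (wdm a s).AbsolutelyContinuous (wdm a t) := wdm_ac ha0 ha1 ht
  have hrd := (wdm_rnDeriv ha0 ha1 hs ht).filter_mono hac.ae_le
  have hcong : (fun x => Real.log (((wdm a s).rnDeriv (wdm a t) x).toReal))
      =ᵐ[wdm a s] fun x => Real.log ((wf a s x / wf a t x).toReal) :=
    hrd.mono fun x hx => by dsimp only at hx ⊢; rw [hx]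
  rw [integral_congr_ae hcong, MeasureTheory.integral_fintype (Integrable.of_finite)]
  simp only [Measure.real, wdm_singleton, smul_eq_mul]
  rw [Fin.sum_univ_three]
  obtain ⟨hs0, hs1⟩ := hs
  obtain ⟨ht0, ht1⟩ := ht
  have ev : ∀ (u v : ℝ), 0 ≤ u → 0 < v →
      (ENNReal.ofReal u).toReal * Real.log ((ENNReal.ofReal u / ENNReal.ofReal v).toReal)
      = u * (Real.log u - Real.log v) := by
    intro u v hu hv
    rw [ENNReal.toReal_div, ENNReal.toReal_ofReal hu, ENNReal.toReal_ofReal hv.le]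
    rcases eq_or_lt_of_le hu with hu0 | hu0
    · rw [← hu0]; simp
    · rw [Real.log_div hu0.ne' hv.ne']
  have e0 : wf a s 0 = ENNReal.ofReal (a * s) := rfl
  have e0' : wf a t 0 = ENNReal.ofReal (a * t) := rfl
  have e1 : wf a s 1 = ENNReal.ofReal (a * (1 - s)) := rfl
  have e1' : wf a t 1 = ENNReal.ofReal (a * (1 - t)) := rfl
  have e2 : wf a s 2 = ENNReal.ofReal (1 - a) := rfl
  have e2' : wf a t 2 = ENNReal.ofReal (1 - a) := rfl
  rw [e0, e0', e1, e1', e2, e2']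
  rw [ev (a * s) (a * t) (by positivity) (by positivity),
    ev (a * (1 - s)) (a * (1 - t)) (by nlinarith) (by nlinarith),
    ev (1 - a) (1 - a) (by linarith) (by linarith)]
  have l1 : Real.log (a * s) - Real.log (a * t) = Real.log s - Real.log t := by
    rw [Real.log_mul ha0.ne' hs0.ne', Real.log_mul ha0.ne' ht0.ne']; ring
  have l2 : Real.log (a * (1 - s)) - Real.log (a * (1 - t))
      = Real.log (1 - s) - Real.log (1 - t) := by
    rw [Real.log_mul ha0.ne' (ne_of_gt (by linarith : (0:ℝ) < 1 - s)),
      Real.log_mul ha0.ne' (ne_of_gt (by linarith : (0:ℝ) < 1 - t))]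
    ring
  rw [l1, l2]
  unfold dKL
  ring

lemma exists_bound (f : Fin 3 → ℝ) :
    ∃ c : ℝ, ∀ᵐ x ∂(Measure.count : Measure (Fin 3)), |f x| ≤ c :=
  ⟨(Finset.univ : Finset (Fin 3)).sup' Finset.univ_nonempty (fun x => |f x|),
    Filter.Eventually.of_forall fun x => Finset.le_sup' (fun y => |f y|) (Finset.mem_univ x)⟩

variable {Θ : Type} [Fintype Θ] [Nonempty Θ] [DecidableEq Θ]

/-- The diluted Bernoulli experiment: with probability `a` emit a Bernoulli(p i) signal,
otherwise an uninformative third signal. -/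
noncomputable def bexp (a : ℝ) (p : Θ → ℝ) (ha0 : 0 < a) (ha1 : a < 1)
    (hp : ∀ i, p i ∈ Set.Ioo (0:ℝ) 1) : Experiment Θ where
  S := Fin 3
  mS := inferInstance
  lam := Measure.count
  sigmaFinite := inferInstance
  P := fun i => wdm a (p i)
  isProb := fun i => wdm_isProb ha0 ha1 (hp i)
  ac := fun i => withDensity_absolutelyContinuous _ _

lemma bexp_isBdd (a : ℝ) (p : Θ → ℝ) (ha0 : 0 < a) (ha1 : a < 1)
    (hp : ∀ i, p i ∈ Set.Ioo (0:ℝ) 1) : (bexp a p ha0 ha1 hp).IsBdd :=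
  fun i j _ => exists_bound
    (fun x => Real.log (((wdm a (p i)).rnDeriv (wdm a (p j)) x).toReal))

lemma bexp_KL (a : ℝ) (p : Θ → ℝ) (ha0 : 0 < a) (ha1 : a < 1)
    (hp : ∀ i, p i ∈ Set.Ioo (0:ℝ) 1) (i j : Θ) :
    (bexp a p ha0 ha1 hp).KL i j = a * dKL (p i) (p j) :=
  wdm_KL ha0 ha1 (hp i) (hp j)

end KLAux

namespace KLAux

open Finset

variable {Θ : Type} [Fintype Θ] [Nonempty Θ] [DecidableEq Θ]

/-- The test vector: s at i₀, t at j₀, 1/2 elsewhere. -/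
noncomputable def pvec (i₀ j₀ : Θ) (s t : ℝ) : Θ → ℝ :=
  fun k => if k = i₀ then s else if k = j₀ then t else 1/2

lemma pvec_valid {i₀ j₀ : Θ} {s t : ℝ} (hs : s ∈ Set.Ioo (0:ℝ) 1)
    (ht : t ∈ Set.Ioo (0:ℝ) 1) : ∀ k, pvec i₀ j₀ s t k ∈ Set.Ioo (0:ℝ) 1 := by
  intro k
  unfold pvec
  split_ifs
  · exact hs
  · exact ht
  · norm_num

lemma core (c : Θ → Θ → ℝ)
    (hc : ∀ p : Θ → ℝ, (∀ i, p i ∈ Set.Ioo (0:ℝ) 1) →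
      ∑ i, ∑ j ∈ Finset.univ.erase i, c i j * dKL (p i) (p j) = 0)
    {i₀ j₀ : Θ} (hne : i₀ ≠ j₀) : c i₀ j₀ = 0 := by
  have h2 : (1:ℝ)/2 ∈ Set.Ioo (0:ℝ) 1 := by norm_num
  -- cross-difference of the hypothesis
  have key : ∀ s t : ℝ, s ∈ Set.Ioo (0:ℝ) 1 → t ∈ Set.Ioo (0:ℝ) 1 →
      c i₀ j₀ * ((s - 1/2) * (Real.log (1 - t) - Real.log t))
        + c j₀ i₀ * ((t - 1/2) * (Real.log (1 - s) - Real.log s)) = 0 := by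
    intro s t hs ht
    have h1 := hc (pvec i₀ j₀ s t) (pvec_valid hs ht)
    have hb := hc (pvec i₀ j₀ s (1/2)) (pvec_valid hs h2)
    have hd := hc (pvec i₀ j₀ (1/2) t) (pvec_valid h2 ht)
    have he := hc (pvec i₀ j₀ (1/2) (1/2)) (pvec_valid h2 h2)
    have hsum : ∑ i, ∑ j ∈ Finset.univ.erase i, c i j *
        (dKL (pvec i₀ j₀ s t i) (pvec i₀ j₀ s t j)
          - dKL (pvec i₀ j₀ s (1/2) i) (pvec i₀ j₀ s (1/2) j)
          - dKL (pvec i₀ j₀ (1/2) t i) (pvec i₀ j₀ (1/2) t j)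
          + dKL (pvec i₀ j₀ (1/2) (1/2) i) (pvec i₀ j₀ (1/2) (1/2) j))
        = c i₀ j₀ * ((s - 1/2) * (Real.log (1 - t) - Real.log t))
          + c j₀ i₀ * ((t - 1/2) * (Real.log (1 - s) - Real.log s)) := by
      rw [← Finset.sum_subset (Finset.subset_univ ({i₀, j₀} : Finset Θ)) ?_]
      · rw [Finset.sum_insert (by simp [hne]), Finset.sum_singleton]
        have inner1 : ∑ j ∈ Finset.univ.erase i₀, c i₀ j *
            (dKL (pvec i₀ j₀ s t i₀) (pvec i₀ j₀ s t j)
              - dKL (pvec i₀ j₀ s (1/2) i₀) (pvec i₀ j₀ s (1/2) j)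
              - dKL (pvec i₀ j₀ (1/2) t i₀) (pvec i₀ j₀ (1/2) t j)
              + dKL (pvec i₀ j₀ (1/2) (1/2) i₀) (pvec i₀ j₀ (1/2) (1/2) j))
            = c i₀ j₀ * ((s - 1/2) * (Real.log (1 - t) - Real.log t)) := by
          rw [Finset.sum_eq_single_of_mem j₀
            (Finset.mem_erase.mpr ⟨Ne.symm hne, Finset.mem_univ _⟩) ?_]
          · have p1 : pvec i₀ j₀ s t i₀ = s := by simp [pvec]
            have p2 : pvec i₀ j₀ s t j₀ = t := by simp [pvec, Ne.symm hne]
            have p3 : pvec i₀ j₀ s (1/2) i₀ = s := by simp [pvec]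
            have p4 : pvec i₀ j₀ s (1/2) j₀ = 1/2 := by simp [pvec, Ne.symm hne]
            have p5 : pvec i₀ j₀ (1/2) t i₀ = 1/2 := by simp [pvec]
            have p6 : pvec i₀ j₀ (1/2) t j₀ = t := by simp [pvec, Ne.symm hne]
            have p7 : pvec i₀ j₀ (1/2) (1/2) i₀ = 1/2 := by simp [pvec]
            have p8 : pvec i₀ j₀ (1/2) (1/2) j₀ = 1/2 := by simp [pvec, Ne.symm hne]
            rw [p1, p2, p3, p4, p5, p6, p7, p8]
            rw [show dKL s t - dKL s (1/2) - dKL (1/2) t + dKL (1/2) (1/2)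
              = (s - 1/2) * (Real.log (1 - t) - Real.log t) from by
                have := dKL_cross s t; linarith]
          · intro j hj hjne
            have hji : j ≠ i₀ := (Finset.mem_erase.mp hj).1
            have pa : ∀ u v : ℝ, pvec i₀ j₀ u v i₀ = u := fun u v => by simp [pvec]
            have pb : ∀ u v : ℝ, pvec i₀ j₀ u v j = 1/2 := fun u v => by
              simp [pvec, hji, hjne]
            simp only [pa, pb]
            ring
        have inner2 : ∑ j ∈ Finset.univ.erase j₀, c j₀ j *
            (dKL (pvec i₀ j₀ s t j₀) (pvec i₀ j₀ s t j)
              - dKL (pvec i₀ j₀ s (1/2) j₀) (pvec i₀ j₀ s (1/2) j)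
              - dKL (pvec i₀ j₀ (1/2) t j₀) (pvec i₀ j₀ (1/2) t j)
              + dKL (pvec i₀ j₀ (1/2) (1/2) j₀) (pvec i₀ j₀ (1/2) (1/2) j))
            = c j₀ i₀ * ((t - 1/2) * (Real.log (1 - s) - Real.log s)) := by
          rw [Finset.sum_eq_single_of_mem i₀
            (Finset.mem_erase.mpr ⟨hne, Finset.mem_univ _⟩) ?_]
          · have p1 : pvec i₀ j₀ s t j₀ = t := by simp [pvec, Ne.symm hne]
            have p2 : pvec i₀ j₀ s t i₀ = s := by simp [pvec]
            have p3 : pvec i₀ j₀ s (1/2) j₀ = 1/2 := by simp [pvec, Ne.symm hne]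
            have p4 : pvec i₀ j₀ s (1/2) i₀ = s := by simp [pvec]
            have p5 : pvec i₀ j₀ (1/2) t j₀ = t := by simp [pvec, Ne.symm hne]
            have p6 : pvec i₀ j₀ (1/2) t i₀ = 1/2 := by simp [pvec]
            have p7 : pvec i₀ j₀ (1/2) (1/2) j₀ = 1/2 := by simp [pvec, Ne.symm hne]
            have p8 : pvec i₀ j₀ (1/2) (1/2) i₀ = 1/2 := by simp [pvec]
            rw [p1, p2, p3, p4, p5, p6, p7, p8]
            rw [show dKL t s - dKL (1/2) s - dKL t (1/2) + dKL (1/2) (1/2)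
              = (t - 1/2) * (Real.log (1 - s) - Real.log s) from by
                have := dKL_cross t s; linarith]
          · intro j hj hjne
            have hjj : j ≠ j₀ := (Finset.mem_erase.mp hj).1
            have pa : ∀ u v : ℝ, pvec i₀ j₀ u v j₀ = v := fun u v => by
              simp [pvec, Ne.symm hne]
            have pb : ∀ u v : ℝ, pvec i₀ j₀ u v j = 1/2 := fun u v => by
              simp [pvec, hjne, hjj]
            simp only [pa, pb]
            ring
        rw [inner1, inner2]
      · intro i _ hi
        have hii : i ≠ i₀ := fun hcon => hi (by simp [hcon])
        have hij : i ≠ j₀ := fun hcon => hi (by simp [hcon])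
        refine Finset.sum_eq_zero fun j hj => ?_
        have pI : ∀ u v : ℝ, pvec i₀ j₀ u v i = 1/2 := fun u v => by simp [pvec, hii, hij]
        rcases eq_or_ne j i₀ with hj0 | hji
        · have q : ∀ u v : ℝ, pvec i₀ j₀ u v j = u := fun u v => by simp [pvec, hj0]
          simp only [pI, q]
          ring
        · rcases eq_or_ne j j₀ with hj0 | hjj
          · have q : ∀ u v : ℝ, pvec i₀ j₀ u v j = v := fun u v => by
              simp [pvec, hji, hj0, Ne.symm hne]
            simp only [pI, q]
            ring
          · have q : ∀ u v : ℝ, pvec i₀ j₀ u v j = 1/2 := fun u v => by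
              simp [pvec, hji, hjj]
            simp only [pI, q]
            ring
    rw [show (∑ i, ∑ j ∈ Finset.univ.erase i, c i j *
        (dKL (pvec i₀ j₀ s t i) (pvec i₀ j₀ s t j)
          - dKL (pvec i₀ j₀ s (1/2) i) (pvec i₀ j₀ s (1/2) j)
          - dKL (pvec i₀ j₀ (1/2) t i) (pvec i₀ j₀ (1/2) t j)
          + dKL (pvec i₀ j₀ (1/2) (1/2) i) (pvec i₀ j₀ (1/2) (1/2) j)))
      = (∑ i, ∑ j ∈ Finset.univ.erase i, c i j * dKL (pvec i₀ j₀ s t i) (pvec i₀ j₀ s t j))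
        - (∑ i, ∑ j ∈ Finset.univ.erase i, c i j * dKL (pvec i₀ j₀ s (1/2) i) (pvec i₀ j₀ s (1/2) j))
        - (∑ i, ∑ j ∈ Finset.univ.erase i, c i j * dKL (pvec i₀ j₀ (1/2) t i) (pvec i₀ j₀ (1/2) t j))
        + (∑ i, ∑ j ∈ Finset.univ.erase i, c i j * dKL (pvec i₀ j₀ (1/2) (1/2) i) (pvec i₀ j₀ (1/2) (1/2) j))
      from by
        rw [← Finset.sum_sub_distrib, ← Finset.sum_sub_distrib, ← Finset.sum_add_distrib]
        refine Finset.sum_congr rfl fun i _ => ?_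
        rw [← Finset.sum_sub_distrib, ← Finset.sum_sub_distrib, ← Finset.sum_add_distrib]
        refine Finset.sum_congr rfl fun j _ => ?_
        ring] at hsum
    rw [h1, hb, hd, he] at hsum
    linarith
  -- numeric instantiations
  have hL3 : (0:ℝ) < Real.log 3 := Real.log_pos (by norm_num)
  have hq : Real.log (1 - (1/4 : ℝ)) - Real.log (1/4) = Real.log 3 := by
    rw [show (1:ℝ) - 1/4 = 3/4 by norm_num, ← Real.log_div (by norm_num) (by norm_num)]
    norm_num
  have hq2 : Real.log (1 - (1/10 : ℝ)) - Real.log (1/10) = 2 * Real.log 3 := by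
    rw [show (1:ℝ) - 1/10 = 9/10 by norm_num, ← Real.log_div (by norm_num) (by norm_num)]
    rw [show (9:ℝ)/10 / (1/10) = 3 ^ 2 by norm_num, Real.log_pow]
    norm_num
  have k1 := key (1/4) (1/4) (by norm_num) (by norm_num)
  have k2 := key (1/4) (1/10) (by norm_num) (by norm_num)
  rw [hq] at k1
  rw [hq2, hq] at k2
  have e1 : (c i₀ j₀ + c j₀ i₀) * Real.log 3 = 0 := by linear_combination (-4 : ℝ) * k1
  have e2 : (c i₀ j₀ + (4/5) * c j₀ i₀) * Real.log 3 = 0 := by linear_combination (-2 : ℝ) * k2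
  have f1 : c i₀ j₀ + c j₀ i₀ = 0 := by
    rcases mul_eq_zero.mp e1 with h | h
    · exact h
    · exact absurd h hL3.ne'
  have f2 : c i₀ j₀ + (4/5) * c j₀ i₀ = 0 := by
    rcases mul_eq_zero.mp e2 with h | h
    · exact h
    · exact absurd h hL3.ne'
  linarith

end KLAux

namespace KLAux

variable {Θ : Type} [Fintype Θ] [Nonempty Θ] [DecidableEq Θ]

lemma ratio_lemma (F F' : (Θ → ℝ) → ℝ)
    (hFnn : ∀ p : Θ → ℝ, (∀ i, p i ∈ Set.Ioo (0:ℝ) 1) → 0 ≤ F p)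
    (hiff : ∀ a b : ℝ, a ∈ Set.Ioo (0:ℝ) 1 → b ∈ Set.Ioo (0:ℝ) 1 →
      ∀ p q : Θ → ℝ, (∀ i, p i ∈ Set.Ioo (0:ℝ) 1) → (∀ i, q i ∈ Set.Ioo (0:ℝ) 1) →
      (b * F q ≤ a * F p ↔ b * F' q ≤ a * F' p)) :
    ∃ l : ℝ, 0 < l ∧ ∀ p : Θ → ℝ, (∀ i, p i ∈ Set.Ioo (0:ℝ) 1) → F' p = l * F p := by
  have hzero : ∀ p, (∀ i, p i ∈ Set.Ioo (0:ℝ) 1) → F p = 0 → F' p = 0 := by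
    intro p hp hFp
    have h1 := (hiff (1/2) (3/4) (by norm_num) (by norm_num) p p hp hp).mp
      (by rw [hFp]; norm_num)
    have h2 := (hiff (3/4) (1/2) (by norm_num) (by norm_num) p p hp hp).mp
      (by rw [hFp]; norm_num)
    linarith
  have hpos : ∀ p, (∀ i, p i ∈ Set.Ioo (0:ℝ) 1) → 0 < F p → 0 < F' p := by
    intro p hp hFp
    by_contra hcon
    push_neg at hcon
    have h1 : ¬ ((3/4 : ℝ) * F p ≤ (1/2) * F p) := by linarith
    exact h1 ((hiff (1/2) (3/4) (by norm_num) (by norm_num) p p hp hp).mpr (by linarith))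
  have key : ∀ p q, (∀ i, p i ∈ Set.Ioo (0:ℝ) 1) → (∀ i, q i ∈ Set.Ioo (0:ℝ) 1) →
      0 < F p → 0 < F q → F' p * F q ≤ F p * F' q := by
    intro p q hp hq hFp hFq
    have hF'p := hpos p hp hFp
    have hF'q := hpos q hq hFq
    set r : ℝ := F' p / F' q with hr
    have hrpos : 0 < r := div_pos hF'p hF'q
    obtain ⟨a, b, ha, hb, hab⟩ : ∃ a b : ℝ, a ∈ Set.Ioo (0:ℝ) 1 ∧ b ∈ Set.Ioo (0:ℝ) 1
        ∧ b = r * a := by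
      rcases le_or_gt r 1 with hr1 | hr1
      · refine ⟨1/2, r/2, by norm_num, ⟨by positivity, by linarith⟩, by ring⟩
      · refine ⟨1/(2*r), 1/2, ⟨by positivity, ?_⟩, by norm_num, by field_simp⟩
        rw [div_lt_one (by linarith)]; linarith
    have heq : b * F' q = a * F' p := by
      rw [hab, hr, div_mul_eq_mul_div, div_mul_eq_mul_div, div_eq_iff hF'q.ne']
      ring
    have hle := (hiff a b ha hb p q hp hq).mpr (le_of_eq heq)
    rw [hab, hr] at hle
    have ha0 := ha.1
    rw [div_mul_eq_mul_div, div_mul_eq_mul_div, div_le_iff₀ hF'q] at hle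
    nlinarith [hle]
  by_cases hall : ∀ p, (∀ i, p i ∈ Set.Ioo (0:ℝ) 1) → F p = 0
  · exact ⟨1, one_pos, fun p hp => by rw [hzero p hp (hall p hp), hall p hp]; ring⟩
  · push_neg at hall
    obtain ⟨q₀, hq₀, hFq₀ne⟩ := hall
    have hFq₀ : 0 < F q₀ := (hFnn q₀ hq₀).lt_of_ne (Ne.symm hFq₀ne)
    have hF'q₀ : 0 < F' q₀ := hpos q₀ hq₀ hFq₀
    refine ⟨F' q₀ / F q₀, div_pos hF'q₀ hFq₀, fun p hp => ?_⟩
    rcases eq_or_lt_of_le (hFnn p hp) with h0 | hFp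
    · rw [hzero p hp h0.symm, ← h0]; ring
    · have k1 := key p q₀ hp hq₀ hFp hFq₀
      have k2 := key q₀ p hq₀ hp hFq₀ hFp
      have : F' p * F q₀ = F p * F' q₀ := by nlinarith [k1, k2]
      rw [div_mul_eq_mul_div, eq_div_iff hFq₀.ne']
      linarith [this]

end KLAux


section Stmt17

variable {Θ : Type} [Fintype Θ] [Nonempty Θ] [DecidableEq Θ]

/-- **Claim (ordinal uniqueness of weighted KL costs).** If two weighted-KL functionals
with nonnegative weight matrices β, β' are ordinally equivalent on bounded experiments,
then the weights are proportional: β' = λ·β for some λ > 0. -/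
theorem weightedKL_ordinal_proportional
    (hΘ : 2 ≤ Fintype.card Θ) (β β' : Θ → Θ → ℝ)
    (hβ : ∀ i j, 0 ≤ β i j) (hβ' : ∀ i j, 0 ≤ β' i j)
    (h : ∀ μ ν : Experiment Θ, μ.IsBdd → ν.IsBdd →
      ((∑ i, ∑ j ∈ Finset.univ.erase i, β i j * ν.KL i j) ≤
        (∑ i, ∑ j ∈ Finset.univ.erase i, β i j * μ.KL i j) ↔
       (∑ i, ∑ j ∈ Finset.univ.erase i, β' i j * ν.KL i j) ≤
        (∑ i, ∑ j ∈ Finset.univ.erase i, β' i j * μ.KL i j))) :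
    ∃ l : ℝ, 0 < l ∧ ∀ i j : Θ, i ≠ j → β' i j = l * β i j := by
  classical
  set F : (Θ → ℝ) → ℝ :=
    fun p => ∑ i, ∑ j ∈ Finset.univ.erase i, β i j * KLAux.dKL (p i) (p j) with hF
  set F' : (Θ → ℝ) → ℝ :=
    fun p => ∑ i, ∑ j ∈ Finset.univ.erase i, β' i j * KLAux.dKL (p i) (p j) with hF'
  have hsum : ∀ (γ : Θ → Θ → ℝ) (a : ℝ) (p : Θ → ℝ) (ha0 : 0 < a) (ha1 : a < 1)
      (hp : ∀ i, p i ∈ Set.Ioo (0:ℝ) 1),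
      (∑ i, ∑ j ∈ Finset.univ.erase i, γ i j * (KLAux.bexp a p ha0 ha1 hp).KL i j)
        = a * ∑ i, ∑ j ∈ Finset.univ.erase i, γ i j * KLAux.dKL (p i) (p j) := by
    intro γ a p ha0 ha1 hp
    rw [Finset.mul_sum]
    refine Finset.sum_congr rfl fun i _ => ?_
    rw [Finset.mul_sum]
    refine Finset.sum_congr rfl fun j _ => ?_
    rw [KLAux.bexp_KL]
    ring
  have hiff : ∀ a b : ℝ, a ∈ Set.Ioo (0:ℝ) 1 → b ∈ Set.Ioo (0:ℝ) 1 →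
      ∀ p q : Θ → ℝ, (∀ i, p i ∈ Set.Ioo (0:ℝ) 1) → (∀ i, q i ∈ Set.Ioo (0:ℝ) 1) →
      (b * F q ≤ a * F p ↔ b * F' q ≤ a * F' p) := by
    intro a b ha hb p q hp hq
    have hh := h (KLAux.bexp a p ha.1 ha.2 hp) (KLAux.bexp b q hb.1 hb.2 hq)
      (KLAux.bexp_isBdd a p ha.1 ha.2 hp) (KLAux.bexp_isBdd b q hb.1 hb.2 hq)
    rw [hsum β a p ha.1 ha.2 hp, hsum β b q hb.1 hb.2 hq,
      hsum β' a p ha.1 ha.2 hp, hsum β' b q hb.1 hb.2 hq] at hh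
    exact hh
  have hFnn : ∀ p : Θ → ℝ, (∀ i, p i ∈ Set.Ioo (0:ℝ) 1) → 0 ≤ F p := by
    intro p hp
    refine Finset.sum_nonneg fun i _ => Finset.sum_nonneg fun j _ => ?_
    exact mul_nonneg (hβ i j) (KLAux.dKL_nonneg (hp i) (hp j))
  obtain ⟨l, hl, hprop⟩ := KLAux.ratio_lemma F F' hFnn hiff
  refine ⟨l, hl, fun i j hij => ?_⟩
  have hcore := KLAux.core (fun i j => β' i j - l * β i j) ?_ hij
  · have hc2 : β' i j - l * β i j = 0 := hcore
    linarith
  · intro p hp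
    have h1 := hprop p hp
    have hdist : ∑ i, ∑ j ∈ Finset.univ.erase i,
        (β' i j - l * β i j) * KLAux.dKL (p i) (p j) = F' p - l * F p := by
      rw [hF, hF']
      simp only [Finset.mul_sum, ← Finset.sum_sub_distrib]
      refine Finset.sum_congr rfl fun i _ => ?_
      refine Finset.sum_congr rfl fun j _ => ?_
      ring
    rw [hdist, h1]
    ring

end Stmt17
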